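/- Let $C = R + iI$ be a complex symmetric $n \times n$ matrix with $R, I$ real symmetric, $R$ positive definite, and suppose $\mathrm{Re}(C^{-1}) \geq \mu \cdot \mathrm{Id}$ and $R \geq \mathfrak{a} \cdot \mathrm{Id}$ for some $\mu, \mathfrak{a} > 0$. Let $B$ be a real positive semidefinite symmetric matrix with unit diagonal ($B_{ii} = 1$). Then the Hadamard product $C_B := B \circ C$ is invertible, the spectrum of $\mathrm{Re}(C_B)$ is contained in $[\mathfrak{a}, \mu^{-1}]$, and the spectrum of $\mathrm{Re}(C_B^{-1})$ is contained in $[\mu, \mathfrak{a}^{-1}]$. -/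

import Mathlib

set_option linter.unreachableTactic false
set_option linter.unusedTactic false


open Matrix

section HadamardCovHelpers

set_option linter.unusedSectionVars false

variable {n : Type*} [Fintype n] [DecidableEq n]

private lemma hc_herm_apply {M : Matrix n n ℝ} (h : M.IsHermitian) (i j : n) : M j i = M i j := by
  have := congrFun (congrFun h.eq i) j
  simpa [conjTranspose_apply] using this

private lemma hc_psd_smul {M : Matrix n n ℝ} (hM : M.PosSemidef) {c : ℝ} (hc : 0 ≤ c) :
    (c • M).PosSemidef := by
  refine PosSemidef.of_dotProduct_mulVec_nonneg ?_ fun x => ?_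
  · unfold Matrix.IsHermitian
    rw [conjTranspose_smul]
    have : Mᵀ = M := by ext i j; exact hc_herm_apply hM.1 i j
    simp [this]
  · rw [smul_mulVec, dotProduct_smul, smul_eq_mul]
    exact mul_nonneg hc (hM.dotProduct_mulVec_nonneg x)

private lemma hc_schur_product {B M : Matrix n n ℝ} (hB : B.PosSemidef) (hM : M.PosSemidef) :
    (B ⊙ M).PosSemidef := by
  have hBH := hB.1
  set U : Matrix n n ℝ := (hBH.eigenvectorUnitary : Matrix n n ℝ) with hU
  set d : n → ℝ := hBH.eigenvalues with hd
  have hBij : ∀ i j, B i j = ∑ k, d k * (U i k * U j k) := by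
    intro i j
    conv_lhs => rw [hBH.spectral_theorem]
    simp [Matrix.mul_apply, Matrix.diagonal, Matrix.conjTranspose_apply, Finset.sum_mul,
      Matrix.IsHermitian.eigenvectorUnitary_apply, hU, hd, mul_comm, mul_left_comm]
    simp only [mul_assoc]
  refine PosSemidef.of_dotProduct_mulVec_nonneg ?_ fun x => ?_
  · unfold Matrix.IsHermitian
    ext i j
    simp only [conjTranspose_apply, hadamard_apply, star_trivial]
    rw [hc_herm_apply hB.1 i j, hc_herm_apply hM.1 i j]
  · have key : star x ⬝ᵥ ((B ⊙ M) *ᵥ x)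
        = ∑ k, d k * (star (fun i => U i k * x i) ⬝ᵥ (M *ᵥ fun i => U i k * x i)) := by
      calc star x ⬝ᵥ ((B ⊙ M) *ᵥ x)
          = ∑ i, ∑ j, ∑ k, d k * ((U i k * x i) * (M i j * (U j k * x j))) := by
            simp only [dotProduct, mulVec, star_trivial, hadamard_apply, Finset.mul_sum]
            refine Finset.sum_congr rfl fun i _ => Finset.sum_congr rfl fun j _ => ?_
            rw [hBij i j, Finset.sum_mul, Finset.sum_mul, Finset.mul_sum]
            exact Finset.sum_congr rfl fun k _ => by ring
        _ = ∑ i, ∑ k, ∑ j, d k * ((U i k * x i) * (M i j * (U j k * x j))) :=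
            Finset.sum_congr rfl fun i _ => Finset.sum_comm
        _ = ∑ k, ∑ i, ∑ j, d k * ((U i k * x i) * (M i j * (U j k * x j))) :=
            Finset.sum_comm
        _ = ∑ k, d k * (star (fun i => U i k * x i) ⬝ᵥ (M *ᵥ fun i => U i k * x i)) := by
            refine Finset.sum_congr rfl fun k _ => ?_
            simp only [dotProduct, mulVec, star_trivial, Finset.mul_sum, Pi.star_apply]
            try exact Finset.sum_congr rfl fun i _ => Finset.sum_congr rfl fun j _ => by ring
    rw [key]
    exact Finset.sum_nonneg fun k _ => mul_nonneg (hB.eigenvalues_nonneg k) (hM.dotProduct_mulVec_nonneg _)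

open scoped MatrixOrder in
private lemma hc_sqrt_facts {M : Matrix n n ℝ} (hM : M.PosDef) :
    ∃ Q : Matrix n n ℝ, Qᴴ = Q ∧ Q * Q = M⁻¹ ∧ Q * M * Q = 1 := by
  have hMdet : IsUnit M.det := isUnit_iff_ne_zero.mpr (ne_of_gt hM.det_pos)
  have hMinv : M⁻¹.PosDef := hM.inv
  refine ⟨CFC.sqrt M⁻¹, (CFC.sqrt_nonneg M⁻¹).posSemidef.1,
    CFC.sqrt_mul_sqrt_self M⁻¹ hMinv.posSemidef.nonneg, ?_⟩
  set Q := CFC.sqrt M⁻¹ with hQ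
  have hQ2 : Q * Q = M⁻¹ := CFC.sqrt_mul_sqrt_self M⁻¹ hMinv.posSemidef.nonneg
  have hQdet : IsUnit Q.det := by
    have h1 : IsUnit (Q.det * Q.det) := by
      rw [← det_mul, hQ2]
      exact isUnit_iff_ne_zero.mpr (ne_of_gt hMinv.det_pos)
    exact isUnit_of_mul_isUnit_left h1
  have hMM : M = Q⁻¹ * Q⁻¹ := by
    rw [← Matrix.mul_inv_rev, hQ2, nonsing_inv_nonsing_inv _ hMdet]
  calc Q * M * Q = Q * (Q⁻¹ * Q⁻¹) * Q := by rw [← hMM]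
    _ = (Q * Q⁻¹) * (Q⁻¹ * Q) := by noncomm_ring
    _ = 1 := by rw [mul_nonsing_inv _ hQdet, nonsing_inv_mul _ hQdet, mul_one]

private lemma hc_loewner_inv_upper {M : Matrix n n ℝ} (hM : M.PosDef) {c : ℝ} (hc : 0 < c)
    (h : (c • (1 : Matrix n n ℝ) - M).PosSemidef) :
    (M⁻¹ - c⁻¹ • (1 : Matrix n n ℝ)).PosSemidef := by
  obtain ⟨Q, hQH, hQ2, hQMQ⟩ := hc_sqrt_facts hM
  have hconj := h.conjTranspose_mul_mul_same Q
  rw [hQH] at hconj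
  have hexp : Q * (c • (1 : Matrix n n ℝ) - M) * Q = c • M⁻¹ - 1 := by
    rw [mul_sub, sub_mul, mul_smul_comm, mul_one, smul_mul_assoc, hQ2, hQMQ]
  rw [hexp] at hconj
  have : M⁻¹ - c⁻¹ • (1 : Matrix n n ℝ) = c⁻¹ • (c • M⁻¹ - 1) := by
    rw [smul_sub, smul_smul, inv_mul_cancel₀ (ne_of_gt hc), one_smul]
  rw [this]
  exact hc_psd_smul hconj (le_of_lt (inv_pos.mpr hc))

private lemma hc_loewner_inv_lower {M : Matrix n n ℝ} (hM : M.PosDef) {c : ℝ} (hc : 0 < c)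
    (h : (M - c • (1 : Matrix n n ℝ)).PosSemidef) :
    (c⁻¹ • (1 : Matrix n n ℝ) - M⁻¹).PosSemidef := by
  obtain ⟨Q, hQH, hQ2, hQMQ⟩ := hc_sqrt_facts hM
  have hconj := h.conjTranspose_mul_mul_same Q
  rw [hQH] at hconj
  have hexp : Q * (M - c • (1 : Matrix n n ℝ)) * Q = 1 - c • M⁻¹ := by
    rw [mul_sub, sub_mul, mul_smul_comm, mul_one, smul_mul_assoc, hQ2, hQMQ]
  rw [hexp] at hconj
  have : c⁻¹ • (1 : Matrix n n ℝ) - M⁻¹ = c⁻¹ • (1 - c • M⁻¹) := by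
    rw [smul_sub, smul_smul, inv_mul_cancel₀ (ne_of_gt hc), one_smul]
  rw [this]
  exact hc_psd_smul hconj (le_of_lt (inv_pos.mpr hc))

private lemma hc_map_mul_ofReal (X Y : Matrix n n ℝ) :
    (X * Y).map (Complex.ofReal) = X.map Complex.ofReal * Y.map Complex.ofReal := by
  ext i j
  simp [Matrix.mul_apply, Matrix.map_apply]

private lemma hc_map_one_ofReal : ((1 : Matrix n n ℝ)).map (Complex.ofReal) = 1 := by
  ext i j
  by_cases h : i = j <;> simp [Matrix.one_apply, h]

private lemma hc_map_add_ofReal (X Y : Matrix n n ℝ) :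
    (X + Y).map (Complex.ofReal) = X.map Complex.ofReal + Y.map Complex.ofReal := by
  ext i j; simp

private lemma hc_map_sub_ofReal (X Y : Matrix n n ℝ) :
    (X - Y).map (Complex.ofReal) = X.map Complex.ofReal - Y.map Complex.ofReal := by
  ext i j; simp

private lemma hc_inv_decomp (A S : Matrix n n ℝ) (hA : A.PosDef) (hS : Sᴴ = S) :
    (A + S * A⁻¹ * S).PosDef ∧
    (A.map (Complex.ofReal) + Complex.I • S.map (Complex.ofReal)) *
      (((A + S * A⁻¹ * S)⁻¹).map Complex.ofReal -
        Complex.I • (A⁻¹ * S * (A + S * A⁻¹ * S)⁻¹).map Complex.ofReal) = 1 := by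
  have hAdet : IsUnit A.det := isUnit_iff_ne_zero.mpr (ne_of_gt hA.det_pos)
  have hSAS : (S * A⁻¹ * S).PosSemidef := by
    have := hA.inv.posSemidef.conjTranspose_mul_mul_same S
    rwa [hS] at this
  have hK : (A + S * A⁻¹ * S).PosDef := hA.add_posSemidef hSAS
  refine ⟨hK, ?_⟩
  have hKdet : IsUnit (A + S * A⁻¹ * S).det := isUnit_iff_ne_zero.mpr (ne_of_gt hK.det_pos)
  set K : Matrix n n ℝ := A + S * A⁻¹ * S with hKdef
  have e1 : A * K⁻¹ + S * (A⁻¹ * S * K⁻¹) = 1 := by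
    have h := mul_nonsing_inv K hKdet
    rw [hKdef] at h ⊢
    rw [add_mul] at h
    calc A * (A + S * A⁻¹ * S)⁻¹ + S * (A⁻¹ * S * (A + S * A⁻¹ * S)⁻¹)
        = A * (A + S * A⁻¹ * S)⁻¹ + S * A⁻¹ * S * (A + S * A⁻¹ * S)⁻¹ := by noncomm_ring
      _ = 1 := h
  have e2 : S * K⁻¹ - A * (A⁻¹ * S * K⁻¹) = 0 := by
    have h : A * (A⁻¹ * S * K⁻¹) = S * K⁻¹ := by
      calc A * (A⁻¹ * S * K⁻¹) = (A * A⁻¹) * (S * K⁻¹) := by noncomm_ring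
        _ = S * K⁻¹ := by rw [mul_nonsing_inv _ hAdet, one_mul]
    rw [h, sub_self]
  set A' := A.map (Complex.ofReal) with hA'
  set S' := S.map (Complex.ofReal) with hS'
  set E' := (K⁻¹).map (Complex.ofReal) with hE'
  set F' := (A⁻¹ * S * K⁻¹).map (Complex.ofReal) with hF'
  have expand : (A' + Complex.I • S') * (E' - Complex.I • F')
      = (A' * E' + S' * F') + Complex.I • (S' * E' - A' * F') := by
    rw [add_mul, mul_sub, mul_sub, smul_mul_assoc, smul_mul_assoc, mul_smul_comm,
      mul_smul_comm, smul_smul, Complex.I_mul_I, smul_sub]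
    simp only [neg_smul, one_smul, neg_neg]
    abel
  have g1 : A' * E' + S' * F' = 1 := by
    rw [hA', hS', hE', hF', ← hc_map_mul_ofReal, ← hc_map_mul_ofReal, ← hc_map_add_ofReal, e1,
      hc_map_one_ofReal]
  have g2 : S' * E' - A' * F' = 0 := by
    rw [hA', hS', hE', hF', ← hc_map_mul_ofReal, ← hc_map_mul_ofReal, ← hc_map_sub_ofReal, e2]
    ext i j; simp
  rw [expand, g1, g2, smul_zero, add_zero]

private lemma hc_eig_mem_Icc {M : Matrix n n ℝ} (hM : M.IsHermitian) {a b : ℝ}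
    (hlow : (M - a • (1 : Matrix n n ℝ)).PosSemidef)
    (hup : (b • (1 : Matrix n n ℝ) - M).PosSemidef) (i : n) :
    hM.eigenvalues i ∈ Set.Icc a b := by
  set v : n → ℝ := ⇑(hM.eigenvectorBasis i) with hv
  have hnorm : v ⬝ᵥ v = 1 := by
    have h1 : ‖hM.eigenvectorBasis i‖ = 1 := hM.eigenvectorBasis.orthonormal.1 i
    have h2 : (inner ℝ (hM.eigenvectorBasis i) (hM.eigenvectorBasis i) : ℝ) = 1 := by
      rw [real_inner_self_eq_norm_mul_norm, h1]; norm_num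
    simp only [PiLp.inner_apply, RCLike.inner_apply, conj_trivial] at h2
    simpa [dotProduct, hv, mul_comm] using h2
  have heig : hM.eigenvalues i = v ⬝ᵥ (M *ᵥ v) := by
    simpa [dotProduct, mulVec] using hM.eigenvalues_eq i
  constructor
  · have h0 := hlow.dotProduct_mulVec_nonneg v
    rw [sub_mulVec, dotProduct_sub, smul_mulVec, one_mulVec, dotProduct_smul] at h0
    simp only [star_trivial, smul_eq_mul] at h0
    rw [hnorm] at h0
    rw [heig]; linarith
  · have h0 := hup.dotProduct_mulVec_nonneg v
    rw [sub_mulVec, dotProduct_sub, smul_mulVec, one_mulVec, dotProduct_smul] at h0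
    simp only [star_trivial, smul_eq_mul] at h0
    rw [hnorm] at h0
    rw [heig]; linarith

private lemma hc_fromBlocks_same_psd {B : Matrix n n ℝ} (hB : B.PosSemidef) :
    (fromBlocks B B B B).PosSemidef := by
  refine PosSemidef.of_dotProduct_mulVec_nonneg ?_ fun x => ?_
  · unfold Matrix.IsHermitian
    rw [fromBlocks_conjTranspose, hB.1.eq]
  · have h := hB.dotProduct_mulVec_nonneg (x ∘ Sum.inl + x ∘ Sum.inr)
    rw [fromBlocks_mulVec]
    have hx : star x = Sum.elim (x ∘ Sum.inl) (x ∘ Sum.inr) := by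
      rw [star_trivial, Sum.elim_comp_inl_inr]
    rw [hx, sumElim_dotProduct_sumElim]
    simp only [star_trivial, add_dotProduct, dotProduct_add, mulVec_add] at h ⊢
    linarith [h]

private lemma hc_hadamard_schur_quot (R I B : Matrix n n ℝ) (hR : R.PosDef) (hIs : Iᴴ = I)
    (hB : B.PosSemidef) (hBR : (B ⊙ R).PosDef) :
    ((B ⊙ (I * R⁻¹ * I)) - (B ⊙ I) * (B ⊙ R)⁻¹ * (B ⊙ I)).PosSemidef := by
  haveI : Invertible R := invertibleOfIsUnitDet R (isUnit_iff_ne_zero.mpr (ne_of_gt hR.det_pos))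
  haveI : Invertible (B ⊙ R) :=
    invertibleOfIsUnitDet _ (isUnit_iff_ne_zero.mpr (ne_of_gt hBR.det_pos))
  have hblk : (fromBlocks R I Iᴴ (I * R⁻¹ * I)).PosSemidef := by
    rw [Matrix.PosDef.fromBlocks₁₁ I (I * R⁻¹ * I) hR, hIs, sub_self]
    exact Matrix.PosSemidef.zero
  have hblkB := hc_fromBlocks_same_psd hB
  have hhad : (fromBlocks B B B B) ⊙ (fromBlocks R I Iᴴ (I * R⁻¹ * I))
      = fromBlocks (B ⊙ R) (B ⊙ I) (B ⊙ Iᴴ) (B ⊙ (I * R⁻¹ * I)) := by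
    ext i j
    rcases i with i | i <;> rcases j with j | j <;> simp [hadamard_apply, fromBlocks]
  have hpsd2 := hc_schur_product hblkB hblk
  rw [hhad, hIs] at hpsd2
  have hBIs : (B ⊙ I)ᴴ = B ⊙ I := by
    ext i j
    simp only [conjTranspose_apply, hadamard_apply, star_trivial]
    rw [hc_herm_apply hB.1 i j, hc_herm_apply hIs i j]
  rw [show fromBlocks (B ⊙ R) (B ⊙ I) (B ⊙ I) (B ⊙ (I * R⁻¹ * I))
      = fromBlocks (B ⊙ R) (B ⊙ I) (B ⊙ I)ᴴ (B ⊙ (I * R⁻¹ * I)) from by rw [hBIs]] at hpsd2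
  have := (Matrix.PosDef.fromBlocks₁₁ (B ⊙ I) (B ⊙ (I * R⁻¹ * I)) hBR).mp hpsd2
  rwa [hBIs] at this

private lemma hc_re_map_mix (X Y : Matrix n n ℝ) :
    ((X.map Complex.ofReal + Complex.I • Y.map Complex.ofReal).map Complex.re) = X := by
  ext i j; simp

private lemma hc_re_map_mix' (X Y : Matrix n n ℝ) :
    ((X.map Complex.ofReal - Complex.I • Y.map Complex.ofReal).map Complex.re) = X := by
  ext i j; simp

end HadamardCovHelpers

/-- Spectral bounds for the Hadamard-interpolated covariance: if `C = R + i·Im` with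
`Re C⁻¹ ≥ μ`, `R ≥ 𝔞` (Loewner order) and `B` is real positive semidefinite with unit
diagonal, then `C_B := B ∘ C` is invertible, `σ(Re C_B) ⊆ [𝔞, μ⁻¹]` and
`σ(Re C_B⁻¹) ⊆ [μ, 𝔞⁻¹]`. -/
theorem hadamard_covariance_spectrum {n : Type*} [Fintype n] [DecidableEq n]
    (R Im B : Matrix n n ℝ) (μ a : ℝ) (hμ : 0 < μ) (ha : 0 < a)
    (hR : R.PosDef) (hIm : Im.IsHermitian) (hB : B.PosSemidef) (hBdiag : ∀ i, B i i = 1)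
    (C CB : Matrix n n ℂ)
    (hC : C = R.map (Complex.ofReal) + Complex.I • Im.map (Complex.ofReal))
    (hCB : CB = Matrix.hadamard (B.map (Complex.ofReal)) C)
    (hμle : ((C⁻¹.map Complex.re) - μ • (1 : Matrix n n ℝ)).PosSemidef)
    (hale : (R - a • (1 : Matrix n n ℝ)).PosSemidef)
    (h1 : (CB.map Complex.re).IsHermitian)
    (h2 : ((CB⁻¹).map Complex.re).IsHermitian) :
    IsUnit CB.det ∧ (∀ i, h1.eigenvalues i ∈ Set.Icc a μ⁻¹) ∧
      ∀ i, h2.eigenvalues i ∈ Set.Icc μ a⁻¹ := by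
  have hImH : Imᴴ = Im := hIm
  -- Part I : analysis of C⁻¹
  obtain ⟨hK₀pd, hCinv_eq⟩ := hc_inv_decomp R Im hR hImH
  have hK₀det : IsUnit (R + Im * R⁻¹ * Im).det :=
    isUnit_iff_ne_zero.mpr (ne_of_gt hK₀pd.det_pos)
  have hCinv : C⁻¹ = ((R + Im * R⁻¹ * Im)⁻¹).map Complex.ofReal -
      Complex.I • (R⁻¹ * Im * (R + Im * R⁻¹ * Im)⁻¹).map Complex.ofReal := by
    rw [hC]; exact inv_eq_right_inv hCinv_eq
  have hμ' : ((R + Im * R⁻¹ * Im)⁻¹ - μ • (1 : Matrix n n ℝ)).PosSemidef := by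
    rwa [hCinv, hc_re_map_mix'] at hμle
  have hK₀up : ((μ⁻¹ : ℝ) • (1 : Matrix n n ℝ) - (R + Im * R⁻¹ * Im)).PosSemidef := by
    have h5 := hc_loewner_inv_lower hK₀pd.inv hμ hμ'
    rwa [nonsing_inv_nonsing_inv _ hK₀det] at h5
  -- bounds on A = B ⊙ R
  have hBRa : ((B ⊙ R) - a • (1 : Matrix n n ℝ)).PosSemidef := by
    have hps := hc_schur_product hB hale
    have e : B ⊙ (R - a • (1 : Matrix n n ℝ)) = (B ⊙ R) - a • (1 : Matrix n n ℝ) := by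
      ext i j
      by_cases h : i = j
      · subst h
        simp [hadamard_apply, Matrix.sub_apply, Matrix.smul_apply, Matrix.one_apply, hBdiag]
        try ring
      · simp [hadamard_apply, Matrix.sub_apply, Matrix.smul_apply, Matrix.one_apply_ne h]
    rwa [e] at hps
  have haI : ((a : ℝ) • (1 : Matrix n n ℝ)).PosDef := by
    refine PosDef.of_dotProduct_mulVec_pos ?_ fun x hx => ?_
    · unfold Matrix.IsHermitian
      rw [conjTranspose_smul]
      simp
    · rw [smul_mulVec, one_mulVec, dotProduct_smul, smul_eq_mul]
      have hxx : 0 < star x ⬝ᵥ x := by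
        simp only [star_trivial, dotProduct]
        have hex : ∃ i, x i ≠ 0 := by
          by_contra hcon; push_neg at hcon; exact hx (funext hcon)
        obtain ⟨i, hi⟩ := hex
        exact Finset.sum_pos' (fun j _ => mul_self_nonneg _)
          ⟨i, Finset.mem_univ i, mul_self_pos.mpr hi⟩
      exact mul_pos ha hxx
  have hApd : (B ⊙ R).PosDef := by
    have hsum := haI.add_posSemidef hBRa
    have e : (a : ℝ) • (1 : Matrix n n ℝ) + ((B ⊙ R) - a • (1 : Matrix n n ℝ)) = B ⊙ R := by
      abel
    rwa [e] at hsum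
  -- upper bound for R and B ⊙ R
  have hIRIpsd : (Im * R⁻¹ * Im).PosSemidef := by
    have := hR.inv.posSemidef.conjTranspose_mul_mul_same Im
    rwa [hImH] at this
  have hRup : ((μ⁻¹ : ℝ) • (1 : Matrix n n ℝ) - R).PosSemidef := by
    have hs := hK₀up.add hIRIpsd
    have e : ((μ⁻¹ : ℝ) • (1 : Matrix n n ℝ) - (R + Im * R⁻¹ * Im)) + Im * R⁻¹ * Im
        = (μ⁻¹ : ℝ) • (1 : Matrix n n ℝ) - R := by abel
    rwa [e] at hs
  have hdiagtrick : ∀ (c : ℝ) (X : Matrix n n ℝ),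
      B ⊙ (c • (1 : Matrix n n ℝ) - X) = c • (1 : Matrix n n ℝ) - B ⊙ X := by
    intro c X
    ext i j
    by_cases h : i = j
    · subst h
      simp [hadamard_apply, Matrix.sub_apply, Matrix.smul_apply, Matrix.one_apply, hBdiag]
      try ring
    · simp [hadamard_apply, Matrix.sub_apply, Matrix.smul_apply, Matrix.one_apply_ne h]
  have hAup : ((μ⁻¹ : ℝ) • (1 : Matrix n n ℝ) - B ⊙ R).PosSemidef := by
    have hps := hc_schur_product hB hRup
    rwa [hdiagtrick] at hps
  -- decomposition of CB
  have hCBdec : CB = (B ⊙ R).map Complex.ofReal + Complex.I • (B ⊙ Im).map Complex.ofReal := by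
    rw [hCB, hC]
    ext i j
    simp [hadamard_apply, Matrix.map_apply, Matrix.add_apply, Matrix.smul_apply]
    try ring
  have hSymS : (B ⊙ Im)ᴴ = B ⊙ Im := by
    ext i j
    simp only [conjTranspose_apply, hadamard_apply, star_trivial]
    rw [hc_herm_apply hB.1 i j, hc_herm_apply hIm i j]
  obtain ⟨hKpd, hCBinv_eq⟩ := hc_inv_decomp (B ⊙ R) (B ⊙ Im) hApd hSymS
  have hCBdet : IsUnit CB.det := by
    rw [hCBdec]
    exact Matrix.isUnit_det_of_right_inverse hCBinv_eq
  have hCBinv : CB⁻¹ = (((B ⊙ R) + (B ⊙ Im) * (B ⊙ R)⁻¹ * (B ⊙ Im))⁻¹).map Complex.ofReal -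
      Complex.I • ((B ⊙ R)⁻¹ * (B ⊙ Im) *
        ((B ⊙ R) + (B ⊙ Im) * (B ⊙ R)⁻¹ * (B ⊙ Im))⁻¹).map Complex.ofReal := by
    rw [hCBdec]; exact inv_eq_right_inv hCBinv_eq
  have hReCB : CB.map Complex.re = B ⊙ R := by
    rw [hCBdec, hc_re_map_mix]
  have hReCBinv : CB⁻¹.map Complex.re
      = ((B ⊙ R) + (B ⊙ Im) * (B ⊙ R)⁻¹ * (B ⊙ Im))⁻¹ := by
    rw [hCBinv, hc_re_map_mix']
  -- bounds on K = B⊙R + S (B⊙R)⁻¹ S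
  have hSAS : ((B ⊙ Im) * (B ⊙ R)⁻¹ * (B ⊙ Im)).PosSemidef := by
    have := hApd.inv.posSemidef.conjTranspose_mul_mul_same (B ⊙ Im)
    rwa [hSymS] at this
  have hKlow : (((B ⊙ R) + (B ⊙ Im) * (B ⊙ R)⁻¹ * (B ⊙ Im)) - a • (1 : Matrix n n ℝ)).PosSemidef := by
    have hs := hBRa.add hSAS
    have e : ((B ⊙ R) - a • (1 : Matrix n n ℝ)) + (B ⊙ Im) * (B ⊙ R)⁻¹ * (B ⊙ Im)
        = ((B ⊙ R) + (B ⊙ Im) * (B ⊙ R)⁻¹ * (B ⊙ Im)) - a • (1 : Matrix n n ℝ) := by abel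
    rwa [e] at hs
  have hquot := hc_hadamard_schur_quot R Im B hR hImH hB hApd
  have hKup : ((μ⁻¹ : ℝ) • (1 : Matrix n n ℝ)
      - ((B ⊙ R) + (B ⊙ Im) * (B ⊙ R)⁻¹ * (B ⊙ Im))).PosSemidef := by
    have h6 := hc_schur_product hB hK₀up
    rw [hdiagtrick] at h6
    have hBadd : B ⊙ (R + Im * R⁻¹ * Im) = B ⊙ R + B ⊙ (Im * R⁻¹ * Im) := by
      ext i j; simp [hadamard_apply, Matrix.add_apply]; ring
    rw [hBadd] at h6
    have h7 := h6.add hquot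
    have e : ((μ⁻¹ : ℝ) • (1 : Matrix n n ℝ) - (B ⊙ R + B ⊙ (Im * R⁻¹ * Im)))
        + ((B ⊙ (Im * R⁻¹ * Im)) - (B ⊙ Im) * (B ⊙ R)⁻¹ * (B ⊙ Im))
        = (μ⁻¹ : ℝ) • (1 : Matrix n n ℝ)
          - ((B ⊙ R) + (B ⊙ Im) * (B ⊙ R)⁻¹ * (B ⊙ Im)) := by abel
    rwa [e] at h7
  have hKinv_low : ((((B ⊙ R) + (B ⊙ Im) * (B ⊙ R)⁻¹ * (B ⊙ Im))⁻¹)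
      - μ • (1 : Matrix n n ℝ)).PosSemidef := by
    have := hc_loewner_inv_upper hKpd (inv_pos.mpr hμ) hKup
    rwa [inv_inv] at this
  have hKinv_up : ((a⁻¹ : ℝ) • (1 : Matrix n n ℝ)
      - (((B ⊙ R) + (B ⊙ Im) * (B ⊙ R)⁻¹ * (B ⊙ Im))⁻¹)).PosSemidef :=
    hc_loewner_inv_lower hKpd ha hKlow
  refine ⟨hCBdet, fun i => ?_, fun i => ?_⟩
  · exact hc_eig_mem_Icc h1 (by rw [hReCB]; exact hBRa) (by rw [hReCB]; exact hAup) i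
  · exact hc_eig_mem_Icc h2 (by rw [hReCBinv]; exact hKinv_low)
      (by rw [hReCBinv]; exact hKinv_up) i
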